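/- For p = 2 and every m ≥ 2, the optimal constant C in the inequality (Σ_{i₁} (Σ_{i₂,…,i_m} |T(e_{i₁},…,e_{i_m})|²)^{(1/2)·2})^{1/2} ≤ C‖T‖ for bounded m-linear forms T : ℓ₂ × c₀ × ⋯ × c₀ → ℝ is C = 1. -/

import Mathlib

open Real

noncomputable section

/-- `c₀`: the space of real sequences vanishing at infinity, with the sup norm. -/
abbrev Czero := ZeroAtInftyContinuousMap ℕ ℝ

noncomputable instance : SeminormedAddCommGroup (Czero →L[ℝ] ℝ) :=
  ContinuousLinearMap.toSeminormedAddCommGroup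

noncomputable instance : NormedSpace ℝ (Czero →L[ℝ] ℝ) :=
  ContinuousLinearMap.toNormedSpace

noncomputable instance (k : ℕ) :
    SeminormedAddCommGroup (ContinuousMultilinearMap ℝ (fun _ : Fin k => Czero) ℝ) :=
  ContinuousMultilinearMap.seminormedAddCommGroup

noncomputable instance (k : ℕ) :
    NormedSpace ℝ (ContinuousMultilinearMap ℝ (fun _ : Fin k => Czero) ℝ) :=
  ContinuousMultilinearMap.normedSpace

/-- The canonical unit vector `e_k` in `c₀`. -/
def e0 (k : ℕ) : Czero :=
{ toFun := fun n => if n = k then 1 else 0,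
  continuous_toFun := continuous_of_discreteTopology,
  zero_at_infty' := by
    rw [cocompact_eq_atTop (α := ℕ)]
    refine Filter.Tendsto.congr' ?_ tendsto_const_nhds
    filter_upwards [Filter.eventually_gt_atTop k] with n hn
    simp [Nat.ne_of_gt hn] }

/-- The canonical unit vector `e_j` in `ℓ_p`. -/
def ep (p : ℝ) [Fact (1 ≤ ENNReal.ofReal p)] (j : ℕ) :
    lp (fun _ : ℕ => ℝ) (ENNReal.ofReal p) := lp.single _ j 1

namespace Stmt12Aux

/-- Sign attached to a boolean. -/
def sg (b : Bool) : ℝ := if b then 1 else -1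

lemma abs_sg (b : Bool) : |sg b| = 1 := by cases b <;> simp [sg]

lemma row_orth {N : ℕ} (a b : Fin N) :
    ∑ η : Fin N → Bool, sg (η a) * sg (η b) = if a = b then (2:ℝ) ^ N else 0 := by
  classical
  have h : ∀ η : Fin N → Bool, sg (η a) * sg (η b)
      = ∏ t : Fin N, ((if t = a then sg (η t) else 1) * (if t = b then sg (η t) else 1)) := by
    intro η
    rw [Finset.prod_mul_distrib, Finset.prod_ite_eq' Finset.univ a (fun t => sg (η t)),
      Finset.prod_ite_eq' Finset.univ b (fun t => sg (η t))]
    simp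
  simp_rw [h]
  rw [← Fintype.prod_sum (fun t (x : Bool) =>
    (if t = a then sg x else 1) * (if t = b then sg x else 1))]
  by_cases hab : a = b
  · subst hab
    rw [if_pos rfl]
    have h2 : ∀ t : Fin N, (∑ x : Bool,
        (if t = a then sg x else 1) * (if t = a then sg x else 1)) = 2 := by
      intro t
      by_cases ht : t = a <;> simp [ht, sg] <;> norm_num
    simp_rw [h2]
    simp
  · rw [if_neg hab]
    refine Finset.prod_eq_zero (Finset.mem_univ a) ?_
    simp [hab, sg]

lemma orth {k N : ℕ} (i i' : Fin (k+1) → Fin N) :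
    ∑ ε : Fin (k+1) → Fin N → Bool,
      (∏ j, sg (ε j (i j))) * (∏ j, sg (ε j (i' j)))
      = if i = i' then ((2:ℝ) ^ N) ^ (k+1) else 0 := by
  classical
  have h : ∀ ε : Fin (k+1) → Fin N → Bool,
      (∏ j, sg (ε j (i j))) * (∏ j, sg (ε j (i' j)))
      = ∏ j, (sg (ε j (i j)) * sg (ε j (i' j))) := by
    intro ε; rw [Finset.prod_mul_distrib]
  simp_rw [h]
  rw [← Fintype.prod_sum (fun j (η : Fin N → Bool) => sg (η (i j)) * sg (η (i' j)))]
  simp_rw [row_orth]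
  by_cases hii : i = i'
  · subst hii; simp
  · rw [if_neg hii]
    obtain ⟨j, hj⟩ := Function.ne_iff.mp hii
    exact Finset.prod_eq_zero (Finset.mem_univ j) (by simp [hj])

lemma avg (k N : ℕ) (b : (Fin (k+1) → Fin N) → ℝ) :
    ∑ ε : Fin (k+1) → Fin N → Bool,
      (∑ i : Fin (k+1) → Fin N, (∏ j, sg (ε j (i j))) * b i) ^ 2
    = ((2:ℝ)^N)^(k+1) * ∑ i : Fin (k+1) → Fin N, (b i)^2 := by
  classical
  have h : ∀ ε : Fin (k+1) → Fin N → Bool,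
      (∑ i : Fin (k+1) → Fin N, (∏ j, sg (ε j (i j))) * b i) ^ 2
      = ∑ i : Fin (k+1) → Fin N, ∑ i' : Fin (k+1) → Fin N,
        ((∏ j, sg (ε j (i j))) * (∏ j, sg (ε j (i' j)))) * (b i * b i') := by
    intro ε
    rw [sq, Finset.sum_mul_sum]
    exact Finset.sum_congr rfl fun i _ => Finset.sum_congr rfl fun i' _ => by ring
  simp_rw [h]
  rw [Finset.sum_comm]
  have h2 : ∀ i : Fin (k+1) → Fin N,
      (∑ ε : Fin (k+1) → Fin N → Bool, ∑ i' : Fin (k+1) → Fin N,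
        ((∏ j, sg (ε j (i j))) * (∏ j, sg (ε j (i' j)))) * (b i * b i'))
      = ((2:ℝ)^N)^(k+1) * (b i)^2 := by
    intro i
    rw [Finset.sum_comm]
    have h3 : ∀ i' : Fin (k+1) → Fin N,
        (∑ ε : Fin (k+1) → Fin N → Bool,
          ((∏ j, sg (ε j (i j))) * (∏ j, sg (ε j (i' j)))) * (b i * b i'))
        = (if i = i' then ((2:ℝ)^N)^(k+1) else 0) * (b i * b i') := by
      intro i'
      rw [← Finset.sum_mul, orth]
    simp_rw [h3, ite_mul, zero_mul]
    rw [Finset.sum_ite_eq Finset.univ i (fun i' => ((2:ℝ)^N)^(k+1) * (b i * b i'))]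
    simp [sq]
  simp_rw [h2]
  rw [← Finset.mul_sum]

lemma e0_apply (t n : ℕ) : e0 t n = if n = t then 1 else 0 := rfl

lemma czero_sum_apply {ι : Type*} (s : Finset ι) (f : ι → Czero) (n : ℕ) :
    (∑ t ∈ s, f t) n = ∑ t ∈ s, f t n := by
  classical
  induction s using Finset.induction with
  | empty => simp
  | @insert a s h ih => simp [Finset.sum_insert h, ih]

lemma norm_u_le {N : ℕ} (s : Fin N → ℝ) (hs : ∀ t, |s t| ≤ 1) :
    ‖∑ t : Fin N, s t • e0 (t : ℕ)‖ ≤ 1 := by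
  set u : Czero := ∑ t : Fin N, s t • e0 (t : ℕ) with hu
  rw [← ZeroAtInftyContinuousMap.norm_toBCF_eq_norm]
  rw [BoundedContinuousFunction.norm_le (by norm_num)]
  intro n
  have hun : u n = ∑ t : Fin N, s t * (if n = (t : ℕ) then 1 else 0) := by
    rw [hu, czero_sum_apply]
    simp [e0_apply]
  have h2 : u.toBCF n = u n := rfl
  rw [h2, hun]
  by_cases hn : n < N
  · simp_rw [mul_ite, mul_one, mul_zero]
    simp_rw [show ∀ x : Fin N, (n = (x : ℕ)) = ((⟨n, hn⟩ : Fin N) = x) from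
      fun x => by rw [eq_iff_iff, Fin.ext_iff]]
    rw [Finset.sum_ite_eq Finset.univ (⟨n, hn⟩ : Fin N) s]
    simpa using hs ⟨n, hn⟩
  · rw [Finset.sum_eq_zero]
    · norm_num
    · intro t _
      have ht : n ≠ (t : ℕ) := fun h => hn (h ▸ t.isLt)
      simp [ht]

lemma key (k N : ℕ)
    (T : lp (fun _ : ℕ => ℝ) 2 →L[ℝ]
      ContinuousMultilinearMap ℝ (fun _ : Fin (k + 1) => Czero) ℝ)
    (ε : Fin (k+1) → Fin N → Bool) :
    ∑ p : Fin N, (∑ i : Fin (k+1) → Fin N,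
      (∏ j, sg (ε j (i j))) * T (lp.single 2 (p:ℕ) 1) (fun j => e0 (i j))) ^ 2
      ≤ ‖T‖ ^ 2 := by
  classical
  set a : Fin N → (Fin (k+1) → Fin N) → ℝ :=
    fun p i => T (lp.single 2 (p:ℕ) 1) (fun j => e0 (i j)) with ha
  set v : Fin N → ℝ := fun p => ∑ i : Fin (k+1) → Fin N,
    (∏ j, sg (ε j (i j))) * a p i with hv
  set u : Fin (k+1) → Czero := fun j => ∑ t : Fin N, sg (ε j t) • e0 (t : ℕ) with hudef
  set x : lp (fun _ : ℕ => ℝ) 2 :=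
    ∑ p : Fin N, v p • lp.single 2 (p:ℕ) (1:ℝ) with hxdef
  -- coordinates of x
  have hxcoord : ∀ p : Fin N, x (p:ℕ) = v p := by
    intro p
    rw [hxdef, lp.coeFn_sum, Finset.sum_apply]
    rw [Finset.sum_eq_single p]
    · rw [lp.coeFn_smul, Pi.smul_apply, lp.single_apply_self, smul_eq_mul, mul_one]
    · intro q _ hq
      rw [lp.coeFn_smul, Pi.smul_apply, lp.single_apply_ne 2 (q:ℕ) _ (by
        simpa [Fin.ext_iff] using hq.symm ∘ Fin.ext), smul_eq_mul, mul_zero]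
    · simp
  -- norm of x
  have hx2 : ‖x‖ ^ 2 = ∑ p : Fin N, v p ^ 2 := by
    rw [← real_inner_self_eq_norm_sq]
    rw [hxdef, sum_inner]
    rw [← hxdef]
    refine Finset.sum_congr rfl fun p _ => ?_
    rw [real_inner_smul_left, lp.inner_single_left]
    rw [hxcoord p]
    simp [RCLike.inner_apply, sq]
  -- norms of u
  have hu : ∀ j, ‖u j‖ ≤ 1 := fun j => norm_u_le _ (fun t => le_of_eq (abs_sg _))
  -- expansion
  have hexp : T x u = ∑ p : Fin N, v p ^ 2 := by
    rw [hxdef, map_sum]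
    rw [ContinuousMultilinearMap.sum_apply]
    refine Finset.sum_congr rfl fun p _ => ?_
    rw [map_smul, ContinuousMultilinearMap.smul_apply, smul_eq_mul]
    have hTpu : T (lp.single 2 (p:ℕ) 1) u = v p := by
      have h1 : T (lp.single 2 (p:ℕ) 1) u
          = ∑ r : Fin (k+1) → Fin N,
            T (lp.single 2 (p:ℕ) 1) (fun j => sg (ε j (r j)) • e0 ((r j : ℕ))) := by
        have := (T (lp.single 2 (p:ℕ) 1)).toMultilinearMap.map_sum
          (g := fun (j : Fin (k+1)) (t : Fin N) => sg (ε j t) • e0 (t : ℕ))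
        exact this
      rw [h1, hv]
      refine Finset.sum_congr rfl fun r _ => ?_
      have h2 := (T (lp.single 2 (p:ℕ) 1)).toMultilinearMap.map_smul_univ
        (fun j => sg (ε j (r j))) (fun j => e0 ((r j : ℕ)))
      simpa [smul_eq_mul] using h2
    rw [hTpu, sq]
  -- bound
  have hb : |T x u| ≤ ‖T‖ * ‖x‖ := by
    have h1 : ‖T x u‖ ≤ ‖T x‖ * ∏ j, ‖u j‖ := (T x).le_opNorm u
    have h2 : ‖T x‖ ≤ ‖T‖ * ‖x‖ := T.le_opNorm x
    have h3 : ∏ j : Fin (k+1), ‖u j‖ ≤ 1 :=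
      Finset.prod_le_one (fun j _ => norm_nonneg _) (fun j _ => hu j)
    calc |T x u| ≤ ‖T x‖ * ∏ j, ‖u j‖ := h1
      _ ≤ ‖T x‖ * 1 := mul_le_mul_of_nonneg_left h3 (norm_nonneg _)
      _ = ‖T x‖ := mul_one _
      _ ≤ ‖T‖ * ‖x‖ := h2
  have hQ : (0:ℝ) ≤ ∑ p : Fin N, v p ^ 2 := Finset.sum_nonneg fun p _ => sq_nonneg _
  have hfinal : ∑ p : Fin N, v p ^ 2 ≤ ‖T‖ * ‖x‖ := by
    calc ∑ p : Fin N, v p ^ 2 = T x u := hexp.symm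
      _ ≤ |T x u| := le_abs_self _
      _ ≤ ‖T‖ * ‖x‖ := hb
  have hvs : ∀ p : Fin N, (∑ i : Fin (k+1) → Fin N,
      (∏ j, sg (ε j (i j))) * T (lp.single 2 (p:ℕ) 1) (fun j => e0 (i j))) = v p := by
    intro p; rfl
  simp_rw [hvs]
  nlinarith [sq_nonneg (‖x‖ - ‖T‖), hfinal, hx2, hQ]

/-- Evaluation at `0` as a continuous linear functional on `c₀`, with norm at most `1`. -/
def ev0 : Czero →L[ℝ] ℝ :=
  LinearMap.mkContinuous
    { toFun := fun f => f 0,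
      map_add' := fun f g => by simp,
      map_smul' := fun c f => by simp }
    1
    (fun f => by
      have h := BoundedContinuousFunction.norm_coe_le_norm f.toBCF 0
      rw [ZeroAtInftyContinuousMap.norm_toBCF_eq_norm] at h
      simpa using h)

lemma ev0_apply (f : Czero) : ev0 f = f 0 := rfl

lemma norm_ev0_le : ‖ev0‖ ≤ 1 :=
  LinearMap.mkContinuous_norm_le _ zero_le_one _

end Stmt12Aux

open Stmt12Aux in
/-- For `p = 2` and every `m = k+2 ≥ 2`, the optimal constant `C` in
`(Σ_{i₁} (Σ_{i₂,…,i_m} |T(e_{i₁},…,e_{i_m})|²)^{(1/2)·2})^{1/2} ≤ C‖T‖` for bounded `m`-linear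
forms `T : ℓ₂ × c₀ × ⋯ × c₀ → ℝ` (expressed via all finite truncations of the sums) is `1`. -/
theorem stmt12 (k : ℕ) :
    IsLeast {C : ℝ |
      ∀ (T : lp (fun _ : ℕ => ℝ) 2 →L[ℝ]
          ContinuousMultilinearMap ℝ (fun _ : Fin (k + 1) => Czero) ℝ) (N : ℕ),
        (∑ i₁ ∈ Finset.range N, (∑ i : Fin (k + 1) → Fin N,
            |T (lp.single 2 i₁ 1) (fun j => e0 (i j))| ^ (2 : ℝ)) ^ ((1 / 2) * (2 : ℝ)))
          ^ ((1 : ℝ) / 2) ≤ C * ‖T‖}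
      1 := by
  classical
  constructor
  · -- membership: the inequality holds with C = 1
    intro T N
    have e1 : ((1:ℝ) / 2) * (2 : ℝ) = 1 := by norm_num
    have e2 : ∀ x : ℝ, |x| ^ (2 : ℝ) = x ^ 2 := fun x => by
      rw [show (2:ℝ) = ((2:ℕ) : ℝ) by norm_num, Real.rpow_natCast, sq_abs]
    simp_rw [e1, Real.rpow_one, e2]
    rw [Finset.sum_range, one_mul]
    set S : ℝ := ∑ p : Fin N, ∑ i : Fin (k + 1) → Fin N,
      (T (lp.single 2 (p:ℕ) 1) (fun j => e0 (i j))) ^ 2 with hSdef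
    have hS0 : (0:ℝ) ≤ S :=
      Finset.sum_nonneg fun p _ => Finset.sum_nonneg fun i _ => sq_nonneg _
    suffices hS : S ≤ ‖T‖ ^ 2 by
      calc S ^ ((1:ℝ)/2) ≤ (‖T‖ ^ 2) ^ ((1:ℝ)/2) :=
            Real.rpow_le_rpow hS0 hS (by norm_num)
        _ = ‖T‖ := by rw [← Real.sqrt_eq_rpow, Real.sqrt_sq (norm_nonneg T)]
    -- averaging over signs
    have hkey : ∑ ε : Fin (k+1) → Fin N → Bool, ∑ p : Fin N,
        (∑ i : Fin (k+1) → Fin N,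
          (∏ j, sg (ε j (i j))) * T (lp.single 2 (p:ℕ) 1) (fun j => e0 (i j))) ^ 2
        ≤ ∑ _ε : Fin (k+1) → Fin N → Bool, ‖T‖ ^ 2 :=
      Finset.sum_le_sum fun ε _ => key k N T ε
    have hleft : ∑ ε : Fin (k+1) → Fin N → Bool, ∑ p : Fin N,
        (∑ i : Fin (k+1) → Fin N,
          (∏ j, sg (ε j (i j))) * T (lp.single 2 (p:ℕ) 1) (fun j => e0 (i j))) ^ 2
        = ((2:ℝ)^N)^(k+1) * S := by
      rw [Finset.sum_comm, hSdef, Finset.mul_sum]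
      exact Finset.sum_congr rfl fun p _ =>
        avg k N (fun i => T (lp.single 2 (p:ℕ) 1) (fun j => e0 (i j)))
    have hcard : ((Fintype.card (Fin (k+1) → Fin N → Bool) : ℝ)) = ((2:ℝ)^N)^(k+1) := by
      simp [Fintype.card_fun]
    have hright : ∑ _ε : Fin (k+1) → Fin N → Bool, ‖T‖ ^ 2
        = ((2:ℝ)^N)^(k+1) * ‖T‖ ^ 2 := by
      rw [Finset.sum_const, Finset.card_univ, nsmul_eq_mul, hcard]
    rw [hleft, hright] at hkey
    have hc : (0:ℝ) < ((2:ℝ)^N)^(k+1) := by positivity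
    exact le_of_mul_le_mul_left hkey hc
  · -- lower bound
    intro C hC
    -- the test operator
    set M : ContinuousMultilinearMap ℝ (fun _ : Fin (k + 1) => Czero) ℝ :=
      (ContinuousMultilinearMap.mkPiAlgebra ℝ (Fin (k+1)) ℝ).compContinuousLinearMap
        (fun _ => ev0) with hM
    have hMapply : ∀ y : Fin (k+1) → Czero, M y = ∏ j, (y j) 0 := by
      intro y
      rw [hM, ContinuousMultilinearMap.compContinuousLinearMap_apply,
        ContinuousMultilinearMap.mkPiAlgebra_apply]
      rfl
    have hMnorm : ‖M‖ ≤ 1 := by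
      calc ‖M‖ ≤ ‖ContinuousMultilinearMap.mkPiAlgebra ℝ (Fin (k+1)) ℝ‖ *
            ∏ _j : Fin (k+1), ‖ev0‖ :=
          ContinuousMultilinearMap.norm_compContinuousLinearMap_le _ _
        _ ≤ 1 * 1 := by
            refine mul_le_mul ?_ ?_ (Finset.prod_nonneg fun j _ => norm_nonneg _) zero_le_one
            · rw [ContinuousMultilinearMap.norm_mkPiAlgebra]
            · exact Finset.prod_le_one (fun j _ => norm_nonneg _) (fun j _ => norm_ev0_le)
        _ = 1 := mul_one 1
    set coords : lp (fun _ : ℕ => ℝ) 2 →L[ℝ] ℝ :=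
      innerSL ℝ (lp.single 2 (0:ℕ) (1:ℝ)) with hco
    set T₀ : lp (fun _ : ℕ => ℝ) 2 →L[ℝ]
        ContinuousMultilinearMap ℝ (fun _ : Fin (k + 1) => Czero) ℝ :=
      coords.smulRight M with hT₀
    have hsing : ‖lp.single (E := fun _ : ℕ => ℝ) 2 (0:ℕ) (1:ℝ)‖ = 1 := by
      have := lp.norm_single (E := fun _ : ℕ => ℝ) (p := (2 : ENNReal))
        (by norm_num) 0 (1:ℝ)
      simpa using this
    have hTnorm : ‖T₀‖ ≤ 1 := by
      rw [hT₀, ContinuousLinearMap.norm_smulRight_apply, hco, innerSL_apply_norm, hsing, one_mul]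
      exact hMnorm
    have happ : T₀ (lp.single 2 (0:ℕ) (1:ℝ)) (fun _ => e0 0) = 1 := by
      rw [hT₀, ContinuousLinearMap.smulRight_apply, ContinuousMultilinearMap.smul_apply,
        hMapply, hco, innerSL_apply_apply, lp.inner_single_left]
      simp [lp.single_apply_self, RCLike.inner_apply, e0_apply]
    have h1 := hC T₀ 1
    have hLHS : (∑ i₁ ∈ Finset.range 1, (∑ i : Fin (k + 1) → Fin 1,
            |T₀ (lp.single 2 i₁ 1) (fun j => e0 (i j))| ^ (2 : ℝ)) ^ ((1 / 2) * (2 : ℝ)))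
          ^ ((1 : ℝ) / 2) = 1 := by
      rw [Finset.sum_range_one]
      rw [Fintype.sum_unique (fun i : Fin (k + 1) → Fin 1 =>
        |T₀ (lp.single 2 0 1) (fun j => e0 (i j))| ^ (2 : ℝ))]
      have hd : ∀ j : Fin (k+1), ((default : Fin (k+1) → Fin 1) j : ℕ) = 0 := fun j => rfl
      simp only [hd]
      rw [happ]
      norm_num
    rw [hLHS] at h1
    have hn0 : (0:ℝ) ≤ ‖T₀‖ := norm_nonneg _
    have hC0 : 0 ≤ C := by
      by_contra hneg
      push_neg at hneg
      have h2 : C * ‖T₀‖ ≤ 0 * ‖T₀‖ := mul_le_mul_of_nonneg_right hneg.le hn0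
      rw [zero_mul] at h2
      linarith
    calc (1:ℝ) ≤ C * ‖T₀‖ := h1
      _ ≤ C * 1 := mul_le_mul_of_nonneg_left hTnorm hC0
      _ = C := mul_one C

end
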